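/- arXiv:1705.07642 — 4 statements merged into one kernel-verified Lean document; each statement's English description precedes it below -/
import Mathlib

section
/- Let P_X be a probability measure on 𝒳, P_Z a probability measure on 𝒵, G : 𝒵 → 𝒳 measurable, and let P_G be the pushforward of P_Z under G. Then for any measurable cost c : 𝒳 × 𝒳 → [0,∞], the optimal transport cost W_c(P_X, P_G) = inf over couplings Γ of (P_X, P_G) of E_Γ[c(X,Y)] equals the optimal transport cost between P_X and P_Z with cost function c_G(x,z) := c(x, G(z)), i.e., W_c(P_X, P_G) = inf over couplings P of (P_X, P_Z) of E_P[c(X, G(Z))]. -/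
open MeasureTheory
open scoped ENNReal ProbabilityTheory

/-- The set of couplings of two measures. -/
def couplings {α β : Type*} [MeasurableSpace α] [MeasurableSpace β]
    (μ : Measure α) (ν : Measure β) : Set (Measure (α × β)) :=
  {γ | γ.map Prod.fst = μ ∧ γ.map Prod.snd = ν}

/-- Reparametrization of optimal transport: for `P_G = G_* P_Z`,
`W_c(P_X, P_G)` equals the optimal transport cost between `P_X` and `P_Z`
for the cost `c_G(x, z) = c(x, G z)`. -/
theorem ot_reparametrization
    {𝒳 𝒵 : Type*} [MeasurableSpace 𝒳] [MeasurableSpace 𝒵]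
    [StandardBorelSpace 𝒳] [StandardBorelSpace 𝒵] [Nonempty 𝒳] [Nonempty 𝒵]
    (PX : Measure 𝒳) (PZ : Measure 𝒵)
    [IsProbabilityMeasure PX] [IsProbabilityMeasure PZ]
    (G : 𝒵 → 𝒳) (hG : Measurable G)
    (c : 𝒳 × 𝒳 → ℝ≥0∞) (hc : Measurable c) :
    sInf ((fun γ : Measure (𝒳 × 𝒳) => ∫⁻ p, c p ∂γ) ''
        couplings PX (PZ.map G))
      =
    sInf ((fun γ : Measure (𝒳 × 𝒵) => ∫⁻ p, c (p.1, G p.2) ∂γ) ''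
        couplings PX PZ) := by
  apply le_antisymm
  · -- LHS ≤ RHS: push a coupling of (PX, PZ) forward by (id, G)
    refine le_sInf ?_
    rintro _ ⟨γ, ⟨h1, h2⟩, rfl⟩
    have hm : Measurable (Prod.map (id : 𝒳 → 𝒳) G) := measurable_id.prodMap hG
    refine sInf_le ⟨γ.map (Prod.map id G), ⟨?_, ?_⟩, ?_⟩
    · rw [Measure.map_map measurable_fst hm]
      have : (Prod.fst ∘ Prod.map (id : 𝒳 → 𝒳) G) = Prod.fst := rfl
      rw [this, h1]
    · rw [Measure.map_map measurable_snd hm]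
      have : (Prod.snd ∘ Prod.map (id : 𝒳 → 𝒳) G) = G ∘ Prod.snd := rfl
      rw [this, ← Measure.map_map hG measurable_snd, h2]
    · show ∫⁻ p, c p ∂(γ.map (Prod.map id G)) = _
      rw [lintegral_map hc hm]
      rfl
  · -- RHS ≤ LHS: disintegrate a coupling of (PX, PZ.map G)
    refine le_sInf ?_
    rintro _ ⟨Γ, ⟨h1, h2⟩, rfl⟩
    have hΓ : IsProbabilityMeasure Γ := by
      constructor
      have := Measure.map_apply (μ := Γ) measurable_fst MeasurableSet.univ
      simp only [Set.preimage_univ] at this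
      rw [← this, h1, measure_univ]
    set ρ : Measure (𝒳 × 𝒳) := Γ.map Prod.swap with hρ
    have hρfin : IsProbabilityMeasure ρ := Measure.isProbabilityMeasure_map measurable_swap.aemeasurable
    have hρfst : ρ.fst = PZ.map G := by
      rw [Measure.fst, hρ, Measure.map_map measurable_fst measurable_swap]
      exact h2
    have hρsnd : ρ.snd = PX := by
      rw [Measure.snd, hρ, Measure.map_map measurable_snd measurable_swap]
      exact h1
    set κ := ρ.condKernel with hκ
    have hdis : ρ.fst ⊗ₘ κ = ρ := ρ.disintegrate ρ.condKernel
    -- the candidate coupling of (PX, PZ)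
    set P' : Measure (𝒵 × 𝒳) := PZ ⊗ₘ (κ.comap G hG) with hP'
    set P : Measure (𝒳 × 𝒵) := P'.map Prod.swap with hP
    have hsnd' : ∀ t : Set 𝒳, MeasurableSet t → P' (Prod.snd ⁻¹' t) = PX t := by
      intro t ht
      rw [hP', Measure.compProd_apply (measurable_snd ht)]
      have e1 : ∀ z : 𝒵, (Prod.mk z ⁻¹' (Prod.snd ⁻¹' t)) = t := fun z => rfl
      simp_rw [ProbabilityTheory.Kernel.comap_apply, e1]
      rw [← MeasureTheory.lintegral_map (κ.measurable_coe ht) hG, ← hρfst]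
      have : ∫⁻ x, κ x t ∂ρ.fst = (ρ.fst ⊗ₘ κ) (Prod.snd ⁻¹' t) := by
        rw [Measure.compProd_apply (measurable_snd ht)]
        rfl
      rw [this, hdis, hρ, Measure.map_apply measurable_swap (measurable_snd ht)]
      have e2 : (Prod.swap ⁻¹' (Prod.snd ⁻¹' t) : Set (𝒳 × 𝒳)) = Prod.fst ⁻¹' t := rfl
      rw [e2, ← Measure.map_apply measurable_fst ht, h1]
    refine sInf_le ⟨P, ⟨?_, ?_⟩, ?_⟩
    · -- first marginal of P is PX
      rw [hP, Measure.map_map measurable_fst measurable_swap]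
      have : (Prod.fst ∘ (Prod.swap : 𝒵 × 𝒳 → 𝒳 × 𝒵)) = Prod.snd := rfl
      rw [this]
      ext t ht
      rw [Measure.map_apply measurable_snd ht]
      exact hsnd' t ht
    · -- second marginal of P is PZ
      rw [hP, Measure.map_map measurable_snd measurable_swap]
      have : (Prod.snd ∘ (Prod.swap : 𝒵 × 𝒳 → 𝒳 × 𝒵)) = Prod.fst := rfl
      rw [this]
      have := Measure.fst_compProd PZ (κ.comap G hG)
      rw [hP']
      exact this
    · -- the costs agree
      have hmc : Measurable fun p : 𝒵 × 𝒳 => c (p.2, G p.1) :=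
        hc.comp ((measurable_snd.prodMk (hG.comp measurable_fst)))
      show ∫⁻ p : 𝒳 × 𝒵, c (p.1, G p.2) ∂P = ∫⁻ p, c p ∂Γ
      rw [hP, MeasureTheory.lintegral_map (show Measurable fun p : 𝒳 × 𝒵 => c (p.1, G p.2) from hc.comp (measurable_fst.prodMk (hG.comp measurable_snd))) measurable_swap]
      simp only [Prod.fst_swap, Prod.snd_swap]
      have : ∫⁻ p : 𝒵 × 𝒳, c (p.2, G p.1) ∂P'
          = ∫⁻ z, ∫⁻ x, c (x, G z) ∂(κ (G z)) ∂PZ := by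
        rw [hP', Measure.lintegral_compProd hmc]
        simp_rw [ProbabilityTheory.Kernel.comap_apply]
      rw [this]
      have hκm : Measurable fun y : 𝒳 => ∫⁻ x, c (x, y) ∂(κ y) := by
        exact Measurable.lintegral_kernel_prod_right
          (hc.comp (measurable_snd.prodMk measurable_fst))
      rw [← MeasureTheory.lintegral_map hκm hG, ← hρfst]
      have : ∫⁻ y, ∫⁻ x, c (x, y) ∂(κ y) ∂ρ.fst
          = ∫⁻ p : 𝒳 × 𝒳, c (p.2, p.1) ∂(ρ.fst ⊗ₘ κ) := by
        rw [Measure.lintegral_compProd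
          (show Measurable fun p : 𝒳 × 𝒳 => c (p.2, p.1) from
            hc.comp (measurable_snd.prodMk measurable_fst))]
      rw [this, hdis, hρ, MeasureTheory.lintegral_map (show Measurable fun p : 𝒳 × 𝒳 => c (p.2, p.1) from hc.comp (measurable_snd.prodMk measurable_fst)) measurable_swap]
      simp
end

section
/- Let 𝒳 = ℝ^d, c(x,y) = ‖x−y‖², and fix σ² ≥ 0. Define P_G^σ as the law of G(Z) + ε where Z ∼ P_Z, ε ∼ N(0, σ²·I_d) independent of Z. Then W_c(P_X, P_G^σ) ≤ d·σ² + inf over couplings P of (P_X, P_Z) of E_P[‖X − G(Z)‖²], and any measurable G minimizing the right-hand infimum (over G) is independent of σ² and also minimizes W_c(P_X, P_G^0) where P_G^0 = G_* P_Z. -/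
open MeasureTheory ProbabilityTheory
open scoped ENNReal NNReal

section AuxLemmas
open Real Set

lemma integral_mul_exp_neg_mul_sq_eq_zero {b : ℝ} (hb : 0 < b) :
    ∫ t : ℝ, t * rexp (-b * t ^ 2) = 0 := by
  set f : ℝ → ℝ := fun t => t * rexp (-b * t ^ 2) with hf
  have m : MeasurableEmbedding (fun x : ℝ => -x) :=
    (Homeomorph.neg ℝ).measurableEmbedding
  have A : ∫ x, f (-x) = ∫ x, f x := by
    rw [← m.integral_map,
      show Measure.map (fun x : ℝ => -x) volume = volume from Measure.map_neg_eq_self _]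
  have B : ∀ x, f (-x) = - f x := by intro x; simp only [hf]; ring_nf
  simp_rw [B, integral_neg] at A
  linarith

lemma integral_sq_mul_exp_neg_mul_sq {b : ℝ} (hb : 0 < b) :
    ∫ t : ℝ, t ^ 2 * rexp (-b * t ^ 2) = √(π / b) / (2 * b) := by
  have heq : (fun t : ℝ => t ^ 2 * rexp (-b * t ^ 2))
      = fun t : ℝ => (fun x : ℝ => x ^ 2 * rexp (-b * x ^ 2)) |t| := by
    funext t; simp [sq_abs]
  rw [heq, integral_comp_abs (f := fun x : ℝ => x ^ 2 * rexp (-b * x ^ 2))]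
  have h2 : ∫ x in Ioi (0:ℝ), x ^ 2 * rexp (-b * x ^ 2)
      = b ^ (-(2+1)/2 : ℝ) * (1/2) * Real.Gamma ((2+1)/2) := by
    rw [← integral_rpow_mul_exp_neg_mul_rpow (p := 2) (q := 2) (by norm_num) (by norm_num) hb]
    refine setIntegral_congr_fun measurableSet_Ioi (fun x _ => ?_)
    rw [← Real.rpow_natCast x 2]; norm_num
  rw [h2]
  have hg : Real.Gamma ((2+1)/2) = √π / 2 := by
    rw [show ((2:ℝ)+1)/2 = 1/2 + 1 by norm_num, Real.Gamma_add_one (by norm_num),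
      Real.Gamma_one_half_eq]
    ring
  have hbr : b ^ (-(2+1)/2 : ℝ) = (b * √b)⁻¹ := by
    rw [show (-(2+1)/2 : ℝ) = -((1:ℝ) + 1/2) by norm_num, Real.rpow_neg hb.le,
      Real.rpow_add hb, Real.rpow_one, ← Real.sqrt_eq_rpow]
  rw [hg, hbr, Real.sqrt_div pi_nonneg]
  have h1 : √b ≠ 0 := by positivity
  have h0 : b ≠ 0 := ne_of_gt hb
  field_simp

section gauss
variable (c : ℝ) {v : ℝ≥0}

lemma gaussPDF_eq (hv : v ≠ 0) : gaussianPDFReal 0 v =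
    fun t => (√(2 * π * v))⁻¹ * rexp (-(2 * (v:ℝ))⁻¹ * t ^ 2) := by
  have hv' : (0:ℝ) < v := lt_of_le_of_ne (v.coe_nonneg) (by exact_mod_cast (Ne.symm hv))
  funext t
  have h : -(t - 0) ^ 2 / (2 * (v:ℝ)) = -(2 * (v:ℝ))⁻¹ * t ^ 2 := by
    field_simp
    ring
  simp only [gaussianPDFReal, h]

lemma key_decomp (hv : v ≠ 0) :
    (fun t => gaussianPDFReal 0 v t * (c - t) ^ 2) =
      fun t => ((√(2 * π * v))⁻¹ * c ^ 2) * rexp (-(2 * (v:ℝ))⁻¹ * t ^ 2)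
        - (2 * c * (√(2 * π * v))⁻¹) * (t * rexp (-(2 * (v:ℝ))⁻¹ * t ^ 2))
        + (√(2 * π * v))⁻¹ * (t ^ 2 * rexp (-(2 * (v:ℝ))⁻¹ * t ^ 2)) := by
  rw [gaussPDF_eq hv]; funext t; ring

lemma integrable_I3 {b : ℝ} (hb : 0 < b) :
    Integrable (fun t : ℝ => t ^ 2 * rexp (-b * t ^ 2)) := by
  have h := integrable_rpow_mul_exp_neg_mul_sq hb (s := ((2:ℕ):ℝ)) (by norm_num)
  simpa [Real.rpow_natCast] using h

lemma integrable_gauss_sq (hv : v ≠ 0) :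
    Integrable (fun t => gaussianPDFReal 0 v t * (c - t) ^ 2) := by
  have hv' : (0:ℝ) < v := lt_of_le_of_ne (v.coe_nonneg) (by exact_mod_cast (Ne.symm hv))
  have hb : (0:ℝ) < (2 * (v:ℝ))⁻¹ := by positivity
  rw [key_decomp c hv]
  exact (((integrable_exp_neg_mul_sq hb).const_mul _).sub
    ((integrable_mul_exp_neg_mul_sq hb).const_mul _)).add ((integrable_I3 hb).const_mul _)

lemma integral_gauss_sq (hv : v ≠ 0) :
    ∫ t, gaussianPDFReal 0 v t * (c - t) ^ 2 = c ^ 2 + v := by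
  have hv' : (0:ℝ) < v := lt_of_le_of_ne (v.coe_nonneg) (by exact_mod_cast (Ne.symm hv))
  have hb : (0:ℝ) < (2 * (v:ℝ))⁻¹ := by positivity
  set K : ℝ := (√(2 * π * (v:ℝ)))⁻¹ with hK
  have I1 : Integrable (fun t : ℝ => K * c ^ 2 * rexp (-(2 * (v:ℝ))⁻¹ * t ^ 2)) :=
    (integrable_exp_neg_mul_sq hb).const_mul _
  have I2 : Integrable (fun t : ℝ =>
      2 * c * K * (t * rexp (-(2 * (v:ℝ))⁻¹ * t ^ 2))) :=
    (integrable_mul_exp_neg_mul_sq hb).const_mul _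
  have I3 : Integrable (fun t : ℝ => K * (t ^ 2 * rexp (-(2 * (v:ℝ))⁻¹ * t ^ 2))) :=
    (integrable_I3 hb).const_mul _
  have Isub : Integrable (fun t : ℝ => K * c ^ 2 * rexp (-(2 * (v:ℝ))⁻¹ * t ^ 2)
      - 2 * c * K * (t * rexp (-(2 * (v:ℝ))⁻¹ * t ^ 2))) := I1.sub I2
  rw [key_decomp c hv, ← hK, integral_add Isub I3, integral_sub I1 I2, integral_const_mul,
    integral_const_mul, integral_const_mul, integral_gaussian,
    integral_mul_exp_neg_mul_sq_eq_zero hb, integral_sq_mul_exp_neg_mul_sq hb]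
  have hpb : π / (2 * (v:ℝ))⁻¹ = 2 * π * v := by field_simp
  have h2b : (2 * ((2 * (v:ℝ))⁻¹)) = (v:ℝ)⁻¹ := by field_simp
  rw [hpb, h2b, hK]
  have hs : √(2 * π * (v:ℝ)) ≠ 0 := by positivity
  field_simp
  ring

lemma lintegral_sq_gaussianReal (v : ℝ≥0) :
    ∫⁻ t, ENNReal.ofReal ((c - t) ^ 2) ∂(gaussianReal 0 v)
      = ENNReal.ofReal (c ^ 2 + v) := by
  by_cases hv : v = 0
  · subst hv
    rw [gaussianReal_zero_var, lintegral_dirac]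
    norm_num
  · have hgm : Measurable fun t : ℝ => ENNReal.ofReal ((c - t) ^ 2) :=
      ((measurable_const.sub measurable_id).pow_const 2).ennreal_ofReal
    rw [gaussianReal_of_var_ne_zero _ hv,
      lintegral_withDensity_eq_lintegral_mul _ (measurable_gaussianPDF _ _) hgm]
    have h : (fun t => (gaussianPDF 0 v * fun t => ENNReal.ofReal ((c - t) ^ 2)) t)
        = fun t => ENNReal.ofReal (gaussianPDFReal 0 v t * (c - t) ^ 2) := by
      funext t
      simp only [Pi.mul_apply, gaussianPDF]
      rw [← ENNReal.ofReal_mul (gaussianPDFReal_nonneg _ _ _)]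
    rw [h, ← ofReal_integral_eq_lintegral_ofReal (integrable_gauss_sq c hv)
      (ae_of_all _ fun t => mul_nonneg (gaussianPDFReal_nonneg _ _ _) (sq_nonneg _)),
      integral_gauss_sq c hv]
end gauss

lemma pi_map_eval {ι : Type*} [Fintype ι] [DecidableEq ι] {α : ι → Type*}
    [∀ i, MeasurableSpace (α i)] (μ : ∀ i, Measure (α i)) [∀ i, IsProbabilityMeasure (μ i)]
    (i : ι) : (Measure.pi μ).map (Function.eval i) = μ i := by
  ext s hs
  rw [Measure.map_apply (measurable_pi_apply i) hs, Set.eval_preimage, Measure.pi_pi]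
  rw [Finset.prod_eq_single i (fun j _ hj => by
    rw [Function.update_of_ne hj]; exact measure_univ) (by simp)]
  rw [Function.update_self]

lemma lintegral_sq_pi_gaussian {d : ℕ} (v : ℝ≥0) (a : Fin d → ℝ) :
    ∫⁻ e, ENNReal.ofReal (∑ i, (a i - e i) ^ 2)
        ∂(Measure.pi fun _ : Fin d => gaussianReal 0 v)
      = ENNReal.ofReal (∑ i, (a i) ^ 2) + d * v := by
  have h1 : ∀ (b : Fin d → ℝ), ENNReal.ofReal (∑ i, (b i) ^ 2)
      = ∑ i, ENNReal.ofReal ((b i) ^ 2) := fun b =>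
    ENNReal.ofReal_sum_of_nonneg (fun i _ => sq_nonneg _)
  simp_rw [show ∀ e : Fin d → ℝ, ENNReal.ofReal (∑ i, (a i - e i) ^ 2)
      = ∑ i, ENNReal.ofReal ((a i - e i) ^ 2) from fun e => h1 (fun i => a i - e i)]
  rw [lintegral_finset_sum (f := fun (i : Fin d) (e : Fin d → ℝ) => ENNReal.ofReal ((a i - e i) ^ 2)) _ (fun i _ =>
    ((measurable_const.sub (measurable_pi_apply i)).pow_const 2).ennreal_ofReal)]
  have h2 : ∀ i : Fin d, ∫⁻ e, ENNReal.ofReal ((a i - e i) ^ 2)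
      ∂(Measure.pi fun _ : Fin d => gaussianReal 0 v)
      = ENNReal.ofReal ((a i) ^ 2) + v := by
    intro i
    have := lintegral_map (μ := Measure.pi fun _ : Fin d => gaussianReal 0 v)
      (f := fun t : ℝ => ENNReal.ofReal ((a i - t) ^ 2)) (g := Function.eval i)
      (((measurable_const.sub measurable_id).pow_const 2).ennreal_ofReal)
      (measurable_pi_apply i)
    rw [pi_map_eval (fun _ : Fin d => gaussianReal 0 v) i] at this
    rw [← this, lintegral_sq_gaussianReal,
      ENNReal.ofReal_add (sq_nonneg _) v.coe_nonneg, ENNReal.ofReal_coe_nnreal]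
  simp_rw [h2]
  rw [Finset.sum_add_distrib, h1, Finset.sum_const, Finset.card_univ, Fintype.card_fin,
    nsmul_eq_mul]

lemma meas_cost {d : ℕ} : Measurable (fun p : (Fin d → ℝ) × (Fin d → ℝ) =>
    ENNReal.ofReal (∑ i, (p.1 i - p.2 i) ^ 2)) := by
  apply Measurable.ennreal_ofReal
  exact Finset.measurable_sum _ fun i _ =>
    ((measurable_fst.eval.sub measurable_snd.eval).pow_const 2)

lemma meas_costG {d : ℕ} {𝒵 : Type*} [MeasurableSpace 𝒵] {G : 𝒵 → Fin d → ℝ}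
    (hG : Measurable G) : Measurable (fun p : (Fin d → ℝ) × 𝒵 =>
    ENNReal.ofReal (∑ i, (p.1 i - G p.2 i) ^ 2)) := by
  apply Measurable.ennreal_ofReal
  exact Finset.measurable_sum _ fun i _ =>
    ((measurable_fst.eval.sub ((hG.comp measurable_snd).eval)).pow_const 2)

lemma coupling_prob {α β : Type*} [MeasurableSpace α] [MeasurableSpace β]
    {μ : Measure α} {ν : Measure β} [IsProbabilityMeasure μ]
    {γ : Measure (α × β)} (hγ : γ ∈ couplings μ ν) : IsProbabilityMeasure γ := by
  constructor
  rw [← Set.preimage_univ (f := Prod.fst), ← Measure.map_apply measurable_fst .univ, hγ.1,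
    measure_univ]

lemma inf_transfer {d : ℕ} {𝒵 : Type*} [MeasurableSpace 𝒵]
    (PX : Measure (Fin d → ℝ)) (PZ : Measure 𝒵)
    [IsProbabilityMeasure PX] [IsProbabilityMeasure PZ]
    (G : 𝒵 → (Fin d → ℝ)) (hG : Measurable G) :
    sInf ((fun γ : Measure ((Fin d → ℝ) × 𝒵) =>
        ∫⁻ p, ENNReal.ofReal (∑ i, (p.1 i - G p.2 i) ^ 2) ∂γ) '' couplings PX PZ)
      = sInf ((fun γ : Measure ((Fin d → ℝ) × (Fin d → ℝ)) =>
        ∫⁻ p, ENNReal.ofReal (∑ i, (p.1 i - p.2 i) ^ 2) ∂γ) '' couplings PX (PZ.map G)) := by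
  apply le_antisymm
  · -- LHS ≤ RHS : lift couplings of (PX, G_*PZ) via conditional kernel
    refine le_sInf ?_
    rintro b ⟨γ, hγ, rfl⟩
    haveI : IsProbabilityMeasure (PZ.map G) := Measure.isProbabilityMeasure_map hG.aemeasurable
    haveI hγP : IsProbabilityMeasure γ := coupling_prob hγ
    set γ' : Measure ((Fin d → ℝ) × (Fin d → ℝ)) := γ.map Prod.swap with hγ'def
    haveI : IsProbabilityMeasure γ' :=
      Measure.isProbabilityMeasure_map measurable_swap.aemeasurable
    set κ := γ'.condKernel with hκdef
    have hfstγ' : γ'.fst = PZ.map G := by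
      rw [hγ'def, Measure.fst_map_swap]
      exact hγ.2
    have hdis : γ'.fst ⊗ₘ κ = γ' := Measure.disintegrate γ' κ
    set pm0 : Measure (𝒵 × (Fin d → ℝ)) := PZ ⊗ₘ (κ.comap G hG) with hpm0def
    have key : pm0.map (Prod.map G id) = (PZ.map G) ⊗ₘ κ := by
      ext s hs
      rw [Measure.map_apply (hG.prodMap measurable_id) hs,
        Measure.compProd_apply ((hG.prodMap measurable_id) hs),
        Measure.compProd_apply hs,
        lintegral_map (Kernel.measurable_kernel_prodMk_left hs) hG]
      refine lintegral_congr fun z => ?_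
      rw [Kernel.comap_apply]
      have hset : Prod.mk z ⁻¹' (Prod.map G id ⁻¹' s) = Prod.mk (G z) ⁻¹' s := by
        ext x; simp [Prod.map]
      rw [hset]
    have hmapG : pm0.map (Prod.map G id) = γ' := by rw [key, ← hfstγ', hdis]
    set pm : Measure ((Fin d → ℝ) × 𝒵) := pm0.map Prod.swap with hpmdef
    have hmem : pm ∈ couplings PX PZ := by
      constructor
      · rw [hpmdef, Measure.map_map measurable_fst measurable_swap,
          show (Prod.fst ∘ Prod.swap : 𝒵 × (Fin d → ℝ) → (Fin d → ℝ)) = Prod.snd from rfl]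
        have : pm0.map Prod.snd = (pm0.map (Prod.map G id)).map Prod.snd := by
          rw [Measure.map_map measurable_snd (hG.prodMap measurable_id)]
          rfl
        rw [this, hmapG, hγ'def, Measure.map_map measurable_snd measurable_swap,
          show (Prod.snd ∘ Prod.swap : (Fin d → ℝ) × (Fin d → ℝ) → (Fin d → ℝ)) = Prod.fst
            from rfl]
        exact hγ.1
      · rw [hpmdef, Measure.map_map measurable_snd measurable_swap,
          show (Prod.snd ∘ Prod.swap : 𝒵 × (Fin d → ℝ) → 𝒵) = Prod.fst from rfl]
        have := Measure.fst_compProd PZ (κ.comap G hG)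
        rwa [Measure.fst] at this
    have hcost : (fun γ : Measure ((Fin d → ℝ) × 𝒵) =>
        ∫⁻ p, ENNReal.ofReal (∑ i, (p.1 i - G p.2 i) ^ 2) ∂γ) pm
        = ∫⁻ p, ENNReal.ofReal (∑ i, (p.1 i - p.2 i) ^ 2) ∂γ := by
      simp only
      rw [hpmdef, lintegral_map (meas_costG hG) measurable_swap]
      have hm2 : Measurable (fun r : (Fin d → ℝ) × (Fin d → ℝ) =>
          ENNReal.ofReal (∑ i, (r.2 i - r.1 i) ^ 2)) := by
        apply Measurable.ennreal_ofReal
        exact Finset.measurable_sum _ fun i _ =>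
          ((measurable_snd.eval.sub measurable_fst.eval).pow_const 2)
      have h3 : (fun q : 𝒵 × (Fin d → ℝ) =>
          ENNReal.ofReal (∑ i, ((Prod.swap q).1 i - G (Prod.swap q).2 i) ^ 2))
          = fun q : 𝒵 × (Fin d → ℝ) =>
            (fun r : (Fin d → ℝ) × (Fin d → ℝ) =>
              ENNReal.ofReal (∑ i, (r.2 i - r.1 i) ^ 2)) (Prod.map G id q) := rfl
      rw [h3, ← lintegral_map hm2 (hG.prodMap measurable_id), hmapG, hγ'def,
        lintegral_map hm2 measurable_swap]
      rfl
    exact le_of_le_of_eq (sInf_le ⟨pm, hmem, rfl⟩) hcost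
  · -- RHS ≤ LHS : push forward couplings by (id, G)
    refine le_sInf ?_
    rintro b ⟨γ, hγ, rfl⟩
    set γ₂ : Measure ((Fin d → ℝ) × (Fin d → ℝ)) := γ.map (Prod.map id G) with hγ₂def
    have hmem : γ₂ ∈ couplings PX (PZ.map G) := by
      constructor
      · rw [hγ₂def, Measure.map_map measurable_fst (measurable_id.prodMap hG),
          show (Prod.fst ∘ Prod.map id G : (Fin d → ℝ) × 𝒵 → (Fin d → ℝ)) = Prod.fst from rfl]
        exact hγ.1
      · rw [hγ₂def, Measure.map_map measurable_snd (measurable_id.prodMap hG),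
          show (Prod.snd ∘ Prod.map id G : (Fin d → ℝ) × 𝒵 → (Fin d → ℝ)) = G ∘ Prod.snd
            from rfl,
          ← Measure.map_map hG measurable_snd, hγ.2]
    have hcost : (fun γ : Measure ((Fin d → ℝ) × (Fin d → ℝ)) =>
        ∫⁻ p, ENNReal.ofReal (∑ i, (p.1 i - p.2 i) ^ 2) ∂γ) γ₂
        = ∫⁻ p, ENNReal.ofReal (∑ i, (p.1 i - G p.2 i) ^ 2) ∂γ := by
      simp only
      rw [hγ₂def, lintegral_map meas_cost (measurable_id.prodMap hG)]
      rfl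
    exact le_of_le_of_eq (sInf_le ⟨γ₂, hmem, rfl⟩) hcost

end AuxLemmas

/-- For squared Euclidean cost and Gaussian decoder `Y = G(Z) + ε`, `ε ∼ N(0, σ²·I_d)`:
`W_c(P_X, P_G^σ) ≤ d·σ² + inf_{couplings of (P_X,P_Z)} E[‖X − G(Z)‖²]`, and any `G₀`
minimizing the right-hand infimum over `G` also minimizes `W_c(P_X, G_* P_Z)`
(the noiseless case `σ² = 0`). -/
theorem gaussian_decoder_upper_bound
    {d : ℕ} {𝒵 : Type*} [MeasurableSpace 𝒵]
    (PX : Measure (Fin d → ℝ)) (PZ : Measure 𝒵)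
    [IsProbabilityMeasure PX] [IsProbabilityMeasure PZ]
    (v : ℝ≥0)
    (G : 𝒵 → (Fin d → ℝ)) (hG : Measurable G) :
    sInf ((fun γ : Measure ((Fin d → ℝ) × (Fin d → ℝ)) =>
          ∫⁻ p, ENNReal.ofReal (∑ i, (p.1 i - p.2 i) ^ 2) ∂γ) ''
        couplings PX
          ((PZ.prod (Measure.pi fun _ : Fin d => gaussianReal 0 v)).map
            (fun p => G p.1 + p.2)))
      ≤ (d : ℝ≥0∞) * (v : ℝ≥0∞)
        + sInf ((fun γ : Measure ((Fin d → ℝ) × 𝒵) =>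
            ∫⁻ p, ENNReal.ofReal (∑ i, (p.1 i - G p.2 i) ^ 2) ∂γ) '' couplings PX PZ)
    ∧ (∀ G₀ : 𝒵 → (Fin d → ℝ), Measurable G₀ →
        (∀ G' : 𝒵 → (Fin d → ℝ), Measurable G' →
          sInf ((fun γ : Measure ((Fin d → ℝ) × 𝒵) =>
              ∫⁻ p, ENNReal.ofReal (∑ i, (p.1 i - G₀ p.2 i) ^ 2) ∂γ) '' couplings PX PZ)
            ≤ sInf ((fun γ : Measure ((Fin d → ℝ) × 𝒵) =>
              ∫⁻ p, ENNReal.ofReal (∑ i, (p.1 i - G' p.2 i) ^ 2) ∂γ) '' couplings PX PZ)) →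
        ∀ G' : 𝒵 → (Fin d → ℝ), Measurable G' →
          sInf ((fun γ : Measure ((Fin d → ℝ) × (Fin d → ℝ)) =>
              ∫⁻ p, ENNReal.ofReal (∑ i, (p.1 i - p.2 i) ^ 2) ∂γ) ''
            couplings PX (PZ.map G₀))
          ≤ sInf ((fun γ : Measure ((Fin d → ℝ) × (Fin d → ℝ)) =>
              ∫⁻ p, ENNReal.ofReal (∑ i, (p.1 i - p.2 i) ^ 2) ∂γ) ''
            couplings PX (PZ.map G'))) := by

  constructor
  · -- Part 1: the upper bound
    set N : Measure (Fin d → ℝ) := Measure.pi fun _ : Fin d => gaussianReal 0 v with hN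
    set T := ((fun γ : Measure ((Fin d → ℝ) × 𝒵) =>
        ∫⁻ p, ENNReal.ofReal (∑ i, (p.1 i - G p.2 i) ^ 2) ∂γ) '' couplings PX PZ) with hT
    have key : ∀ b ∈ T, sInf ((fun γ : Measure ((Fin d → ℝ) × (Fin d → ℝ)) =>
          ∫⁻ p, ENNReal.ofReal (∑ i, (p.1 i - p.2 i) ^ 2) ∂γ) ''
        couplings PX ((PZ.prod N).map (fun p => G p.1 + p.2)))
        ≤ (d : ℝ≥0∞) * (v : ℝ≥0∞) + b := by
      rintro b ⟨γ, hγ, rfl⟩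
      haveI : IsProbabilityMeasure γ := coupling_prob hγ
      have hadd : Measurable (fun q : ((Fin d → ℝ) × 𝒵) × (Fin d → ℝ) =>
          G q.1.2 + q.2) := by
        exact measurable_pi_lambda _ fun i =>
          ((hG.comp measurable_fst.snd).eval.add measurable_snd.eval)
      have hq : Measurable (fun q : ((Fin d → ℝ) × 𝒵) × (Fin d → ℝ) =>
          ((q.1.1, G q.1.2 + q.2) : (Fin d → ℝ) × (Fin d → ℝ))) :=
        measurable_fst.fst.prodMk hadd
      have haddz : Measurable (fun p : 𝒵 × (Fin d → ℝ) => G p.1 + p.2) := by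
        exact measurable_pi_lambda _ fun i =>
          ((hG.comp measurable_fst).eval.add measurable_snd.eval)
      set pm : Measure ((Fin d → ℝ) × (Fin d → ℝ)) :=
        (γ.prod N).map (fun q => (q.1.1, G q.1.2 + q.2)) with hpmdef
      have hmem : pm ∈ couplings PX ((PZ.prod N).map (fun p => G p.1 + p.2)) := by
        constructor
        · rw [hpmdef, Measure.map_map measurable_fst hq,
            show (Prod.fst ∘ (fun q : ((Fin d → ℝ) × 𝒵) × (Fin d → ℝ) =>
              ((q.1.1, G q.1.2 + q.2) : (Fin d → ℝ) × (Fin d → ℝ))))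
              = (Prod.fst ∘ Prod.fst) from rfl,
            ← Measure.map_map measurable_fst measurable_fst]
          have h1 : (γ.prod N).map Prod.fst = γ := by
            have := Measure.fst_prod (μ := γ) (ν := N)
            rwa [Measure.fst] at this
          rw [h1, hγ.1]
        · rw [hpmdef, Measure.map_map measurable_snd hq,
            show (Prod.snd ∘ (fun q : ((Fin d → ℝ) × 𝒵) × (Fin d → ℝ) =>
              ((q.1.1, G q.1.2 + q.2) : (Fin d → ℝ) × (Fin d → ℝ))))
              = (fun p : 𝒵 × (Fin d → ℝ) => G p.1 + p.2) ∘
                (Prod.map (Prod.snd : (Fin d → ℝ) × 𝒵 → 𝒵) (id : (Fin d → ℝ) → (Fin d → ℝ)))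
              from rfl,
            ← Measure.map_map haddz (measurable_snd.prodMap measurable_id)]
          have h2 : (γ.prod N).map (Prod.map Prod.snd id) = PZ.prod N := by
            rw [← Measure.map_prod_map _ _ measurable_snd measurable_id, hγ.2,
              Measure.map_id]
          rw [h2]
      have hcost : (fun γ : Measure ((Fin d → ℝ) × (Fin d → ℝ)) =>
          ∫⁻ p, ENNReal.ofReal (∑ i, (p.1 i - p.2 i) ^ 2) ∂γ) pm
          = (d : ℝ≥0∞) * (v : ℝ≥0∞)
            + ∫⁻ p, ENNReal.ofReal (∑ i, (p.1 i - G p.2 i) ^ 2) ∂γ := by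
        simp only
        rw [hpmdef, lintegral_map meas_cost hq]
        have hin : (fun q : ((Fin d → ℝ) × 𝒵) × (Fin d → ℝ) =>
            ENNReal.ofReal (∑ i, (q.1.1 i - (G q.1.2 + q.2) i) ^ 2))
            = fun q => ENNReal.ofReal (∑ i, ((q.1.1 i - G q.1.2 i) - q.2 i) ^ 2) := by
          funext q
          congr 1
          refine Finset.sum_congr rfl fun i _ => ?_
          simp only [Pi.add_apply]
          ring
        rw [hin]
        have hmeas2 : Measurable (fun q : ((Fin d → ℝ) × 𝒵) × (Fin d → ℝ) =>
            ENNReal.ofReal (∑ i, ((q.1.1 i - G q.1.2 i) - q.2 i) ^ 2)) := by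
          apply Measurable.ennreal_ofReal
          exact Finset.measurable_sum _ fun i _ =>
            (((measurable_fst.fst.eval.sub
              ((hG.comp measurable_fst.snd)).eval)).sub measurable_snd.eval).pow_const 2
        rw [lintegral_prod _ hmeas2.aemeasurable]
        have hinner : ∀ ω : (Fin d → ℝ) × 𝒵,
            ∫⁻ e, ENNReal.ofReal (∑ i, ((ω.1 i - G ω.2 i) - e i) ^ 2) ∂N
              = ENNReal.ofReal (∑ i, (ω.1 i - G ω.2 i) ^ 2) + d * v := fun ω =>
          lintegral_sq_pi_gaussian v (fun i => ω.1 i - G ω.2 i)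
        rw [lintegral_congr fun ω => hinner ω, lintegral_add_right _ measurable_const,
          lintegral_const, measure_univ, mul_one, add_comm]
      exact le_of_le_of_eq (sInf_le ⟨pm, hmem, rfl⟩) hcost
    calc sInf ((fun γ : Measure ((Fin d → ℝ) × (Fin d → ℝ)) =>
          ∫⁻ p, ENNReal.ofReal (∑ i, (p.1 i - p.2 i) ^ 2) ∂γ) ''
        couplings PX ((PZ.prod N).map (fun p => G p.1 + p.2)))
        ≤ ⨅ b : T, ((d : ℝ≥0∞) * (v : ℝ≥0∞) + b) := le_iInf fun b => key b b.2
      _ = (d : ℝ≥0∞) * (v : ℝ≥0∞) + sInf T := by rw [sInf_eq_iInf', ENNReal.add_iInf]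
  · -- Part 2
    intro G₀ hG₀ hmin G' hG'
    rw [← inf_transfer PX PZ G₀ hG₀, ← inf_transfer PX PZ G' hG']
    exact hmin G' hG'
end

section
/- Let P, Q be probability measures on a measurable space and define D_GAN(P,Q) = sup over measurable T : 𝒳 → (0,1) of E_P[log T] + E_Q[log(1−T)]. Then D_GAN(P,Q) = 2·D_JS(P,Q) − log 4, where D_JS is the Jensen-Shannon divergence, and in particular D_GAN(P,Q) ≤ 2·D_JS(P,Q) − log 4 with the supremum attained at T*(x) = dP/d(P+Q)(x) when densities exist. -/
open MeasureTheory

/-- Kullback-Leibler divergence between densities `p, q` w.r.t. a reference measure `ν`. -/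
noncomputable def klD {𝒳 : Type*} [MeasurableSpace 𝒳] (ν : Measure 𝒳)
    (p q : 𝒳 → ℝ) : ℝ :=
  ∫ x, p x * Real.log (p x / q x) ∂ν

/-- Jensen-Shannon divergence between densities `p, q` w.r.t. `ν`. -/
noncomputable def jsD {𝒳 : Type*} [MeasurableSpace 𝒳] (ν : Measure 𝒳)
    (p q : 𝒳 → ℝ) : ℝ :=
  (1 / 2) * klD ν p (fun x => (p x + q x) / 2)
    + (1 / 2) * klD ν q (fun x => (p x + q x) / 2)

/-- Pointwise optimality of `t = a/(a+b)`. -/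
lemma pointwise_opt (a b t : ℝ) (ha : 0 < a) (hb : 0 < b)
    (ht : t ∈ Set.Ioo (0 : ℝ) 1) :
    a * Real.log t + b * Real.log (1 - t)
      ≤ a * Real.log (a / (a + b)) + b * Real.log (1 - a / (a + b)) := by
  obtain ⟨ht0, ht1⟩ := ht
  have hc : 0 < a + b := by linarith
  have h1mb : 1 - a / (a + b) = b / (a + b) := by field_simp; ring
  rw [h1mb]
  have h1t : 0 < 1 - t := by linarith
  have hL1 : Real.log t - Real.log (a / (a + b)) = Real.log (t / (a / (a + b))) := by
    rw [Real.log_div ht0.ne' (by positivity)]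
  have hL2 : Real.log (1 - t) - Real.log (b / (a + b))
      = Real.log ((1 - t) / (b / (a + b))) := by
    rw [Real.log_div h1t.ne' (by positivity)]
  have hb1 : Real.log (t / (a / (a + b))) ≤ t / (a / (a + b)) - 1 :=
    Real.log_le_sub_one_of_pos (by positivity)
  have hb2 : Real.log ((1 - t) / (b / (a + b))) ≤ (1 - t) / (b / (a + b)) - 1 :=
    Real.log_le_sub_one_of_pos (by positivity)
  have e1 : t / (a / (a + b)) = t * (a + b) / a := by field_simp
  have e2 : (1 - t) / (b / (a + b)) = (1 - t) * (a + b) / b := by field_simp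
  rw [e1] at hb1; rw [e2] at hb2
  have k1 : a * (Real.log t - Real.log (a / (a + b))) ≤ t * (a + b) - a := by
    rw [hL1, e1]
    calc a * Real.log (t * (a + b) / a) ≤ a * (t * (a + b) / a - 1) := by
          exact mul_le_mul_of_nonneg_left hb1 ha.le
      _ = t * (a + b) - a := by field_simp
  have k2 : b * (Real.log (1 - t) - Real.log (b / (a + b)))
      ≤ (1 - t) * (a + b) - b := by
    rw [hL2, e2]
    calc b * Real.log ((1 - t) * (a + b) / b) ≤ b * ((1 - t) * (a + b) / b - 1) := by
          exact mul_le_mul_of_nonneg_left hb2 hb.le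
      _ = (1 - t) * (a + b) - b := by field_simp
  nlinarith [k1, k2]

/-- The GAN objective `D_GAN(P,Q) = sup_T E_P[log T] + E_Q[log(1−T)]` over discriminators
`T : 𝒳 → (0,1)` equals `2·D_JS(P,Q) − log 4`, with the supremum attained at
`T* = p/(p+q)`. -/
theorem gan_objective_eq_js
    {𝒳 : Type*} [MeasurableSpace 𝒳] (ν : Measure 𝒳)
    (p q : 𝒳 → ℝ) (hp : Measurable p) (hq : Measurable q)
    (hppos : ∀ x, 0 < p x) (hqpos : ∀ x, 0 < q x)
    (hp1 : ∫ x, p x ∂ν = 1) (hq1 : ∫ x, q x ∂ν = 1)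
    (hint : ∀ T : 𝒳 → ℝ, Measurable T → (∀ x, T x ∈ Set.Ioo (0 : ℝ) 1) →
      Integrable (fun x => p x * Real.log (T x) + q x * Real.log (1 - T x)) ν)
    (hjs1 : Integrable (fun x => p x * Real.log (p x / ((p x + q x) / 2))) ν)
    (hjs2 : Integrable (fun x => q x * Real.log (q x / ((p x + q x) / 2))) ν) :
    (⨆ T : {T : 𝒳 → ℝ // Measurable T ∧ ∀ x, T x ∈ Set.Ioo (0 : ℝ) 1},
        ∫ x, p x * Real.log (T.1 x) + q x * Real.log (1 - T.1 x) ∂ν)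
      = 2 * jsD ν p q - Real.log 4
    ∧ (∫ x, p x * Real.log (p x / (p x + q x))
          + q x * Real.log (1 - p x / (p x + q x)) ∂ν)
        = 2 * jsD ν p q - Real.log 4 := by
  have hip : Integrable p ν := by
    by_contra h; rw [integral_undef h] at hp1; norm_num at hp1
  have hiq : Integrable q ν := by
    by_contra h; rw [integral_undef h] at hq1; norm_num at hq1
  set Tstar : 𝒳 → ℝ := fun x => p x / (p x + q x) with hT
  have hTmeas : Measurable Tstar := hp.div (hp.add hq)
  have hTmem : ∀ x, Tstar x ∈ Set.Ioo (0 : ℝ) 1 := by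
    intro x
    have hpx := hppos x; have hqx := hqpos x
    constructor
    · positivity
    · rw [div_lt_one (by linarith)]; linarith
  have hTint := hint Tstar hTmeas hTmem
  -- pointwise rewriting of the optimal integrand
  have hpt : ∀ x, p x * Real.log (Tstar x) + q x * Real.log (1 - Tstar x)
      = (p x * Real.log (p x / ((p x + q x) / 2))
        + q x * Real.log (q x / ((p x + q x) / 2)))
        - (p x + q x) * Real.log 2 := by
    intro x
    have hpx := hppos x; have hqx := hqpos x
    have hc : 0 < p x + q x := by linarith
    have h1m : 1 - Tstar x = q x / (p x + q x) := by
      simp only [hT]; field_simp; ring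
    have e1 : Tstar x = (p x / ((p x + q x) / 2)) / 2 := by
      simp only [hT, div_div]; rw [div_eq_div_iff hc.ne' (by positivity)]; ring
    have e2 : q x / (p x + q x) = (q x / ((p x + q x) / 2)) / 2 := by
      rw [div_div, div_eq_div_iff hc.ne' (by positivity)]; ring
    have lp : Real.log (Tstar x)
        = Real.log (p x / ((p x + q x) / 2)) - Real.log 2 := by
      rw [e1, Real.log_div (by positivity) (by norm_num)]
    have lq : Real.log (q x / (p x + q x))
        = Real.log (q x / ((p x + q x) / 2)) - Real.log 2 := by
      rw [e2, Real.log_div (by positivity) (by norm_num)]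
    rw [h1m, lp, lq]
    ring
  -- value of the integral at Tstar
  have hval : (∫ x, p x * Real.log (Tstar x) + q x * Real.log (1 - Tstar x) ∂ν)
      = 2 * jsD ν p q - Real.log 4 := by
    have hcongr : (∫ x, p x * Real.log (Tstar x) + q x * Real.log (1 - Tstar x) ∂ν)
        = ∫ x, (p x * Real.log (p x / ((p x + q x) / 2))
          + q x * Real.log (q x / ((p x + q x) / 2)))
          - (p x + q x) * Real.log 2 ∂ν := by
      exact integral_congr_ae (Filter.Eventually.of_forall hpt)
    have hA : Integrable (fun x => p x * Real.log (p x / ((p x + q x) / 2))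
        + q x * Real.log (q x / ((p x + q x) / 2))) ν := hjs1.add hjs2
    have hB : Integrable (fun x => (p x + q x) * Real.log 2) ν :=
      (hip.add hiq).mul_const _
    rw [hcongr, integral_sub hA hB, integral_add hjs1 hjs2]
    have : (∫ x, (p x + q x) * Real.log 2 ∂ν) = 2 * Real.log 2 := by
      rw [integral_mul_const]
      rw [integral_add hip hiq, hp1, hq1]; ring
    rw [this]
    have h4 : Real.log 4 = 2 * Real.log 2 := by
      rw [show (4 : ℝ) = 2 * 2 by norm_num, Real.log_mul (by norm_num) (by norm_num)]
      ring
    simp only [jsD, klD]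
    rw [h4]; ring
  haveI : Nonempty {T : 𝒳 → ℝ // Measurable T ∧ ∀ x, T x ∈ Set.Ioo (0 : ℝ) 1} :=
    ⟨⟨Tstar, hTmeas, hTmem⟩⟩
  constructor
  · apply le_antisymm
    · apply ciSup_le
      intro T
      rw [← hval]
      apply integral_mono (hint T.1 T.2.1 T.2.2) hTint
      intro x
      exact pointwise_opt (p x) (q x) (T.1 x) (hppos x) (hqpos x) (T.2.2 x)
    · rw [← hval]
      refine le_ciSup (f := fun T : {T : 𝒳 → ℝ // Measurable T ∧ ∀ x, T x ∈ Set.Ioo (0 : ℝ) 1} =>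
        ∫ x, p x * Real.log (T.1 x) + q x * Real.log (1 - T.1 x) ∂ν) ?_ ⟨Tstar, hTmeas, hTmem⟩
      refine ⟨2 * jsD ν p q - Real.log 4, ?_⟩
      rintro y ⟨T, rfl⟩
      rw [← hval]
      apply integral_mono (hint T.1 T.2.1 T.2.2) hTint
      intro x
      exact pointwise_opt (p x) (q x) (T.1 x) (hppos x) (hqpos x) (T.2.2 x)
  · exact hval
end

section
/- Let P_X, P_Z be probability measures on Polish spaces 𝒳, 𝒵 and G : 𝒵 → 𝒳 measurable. For any Markov kernel Q from 𝒳 to 𝒵 whose aggregated posterior Q_Z (the law of Z when X ∼ P_X, Z ∼ Q(·|X)) equals P_Z, the joint law of (X, G(Z)) is a coupling of P_X and P_G := G_* P_Z, and hence E_{P_X}E_{Q(Z|X)}[c(X, G(Z))] ≥ W_c(P_X, P_G) for any measurable cost c ≥ 0. Conversely, the infimum over such constrained Q of this expectation equals W_c(P_X, P_G). -/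
open MeasureTheory ProbabilityTheory
open scoped ENNReal

lemma aux_snd_compProd {α β : Type*} [MeasurableSpace α] [MeasurableSpace β]
    (μ : Measure α) [SFinite μ] (κ : Kernel α β) [IsSFiniteKernel κ] :
    (μ ⊗ₘ κ).snd = μ.bind (fun x => κ x) := by
  ext s hs
  rw [Measure.snd_apply hs, Measure.compProd_apply (measurable_snd hs),
    Measure.bind_apply hs (Kernel.measurable κ).aemeasurable]
  rfl

/-- Direct part: the pushforward of `PX ⊗ₘ Q` is a coupling with the expected cost. -/
lemma aux_direct
    {𝒳 𝒵 : Type*} [MeasurableSpace 𝒳] [MeasurableSpace 𝒵]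
    (PX : Measure 𝒳) (PZ : Measure 𝒵)
    [IsProbabilityMeasure PX] [IsProbabilityMeasure PZ]
    (G : 𝒵 → 𝒳) (hG : Measurable G)
    (c : 𝒳 × 𝒳 → ℝ≥0∞) (hc : Measurable c)
    (Q : Kernel 𝒳 𝒵) (hQ : IsMarkovKernel Q) (hbind : PX.bind (fun x => Q x) = PZ) :
    (PX ⊗ₘ Q).map (fun p => (p.1, G p.2)) ∈ couplings PX (PZ.map G)
      ∧ ∫⁻ p, c p ∂((PX ⊗ₘ Q).map (fun p => (p.1, G p.2)))
          = ∫⁻ x, ∫⁻ z, c (x, G z) ∂(Q x) ∂PX := by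
  have hf : Measurable (fun p : 𝒳 × 𝒵 => (p.1, G p.2)) :=
    measurable_fst.prodMk (hG.comp measurable_snd)
  refine ⟨⟨?_, ?_⟩, ?_⟩
  · rw [Measure.map_map measurable_fst hf]
    exact Measure.fst_compProd PX Q
  · rw [Measure.map_map measurable_snd hf,
      show (Prod.snd ∘ fun p : 𝒳 × 𝒵 => (p.1, G p.2)) = G ∘ Prod.snd from rfl,
      ← Measure.map_map hG measurable_snd]
    have hsnd : (PX ⊗ₘ Q).map Prod.snd = PZ := by
      rw [show (PX ⊗ₘ Q).map Prod.snd = (PX ⊗ₘ Q).snd from rfl, aux_snd_compProd, hbind]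
    rw [hsnd]
  · rw [lintegral_map hc hf]
    exact Measure.lintegral_compProd (hc.comp hf)

/-- Converse part: each coupling of `PX` and `G_* PZ` is realized by a constrained kernel. -/
lemma aux_converse
    {𝒳 𝒵 : Type*} [MeasurableSpace 𝒳] [MeasurableSpace 𝒵]
    [StandardBorelSpace 𝒳] [StandardBorelSpace 𝒵] [Nonempty 𝒳] [Nonempty 𝒵]
    (PX : Measure 𝒳) (PZ : Measure 𝒵)
    [IsProbabilityMeasure PX] [IsProbabilityMeasure PZ]
    (G : 𝒵 → 𝒳) (hG : Measurable G)
    (c : 𝒳 × 𝒳 → ℝ≥0∞) (hc : Measurable c)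
    (γ : Measure (𝒳 × 𝒳)) (hγ : γ ∈ couplings PX (PZ.map G)) :
    ∃ Q : Kernel 𝒳 𝒵, ∃ _ : IsMarkovKernel Q, PX.bind (fun x => Q x) = PZ ∧
      ∫⁻ x, ∫⁻ z, c (x, G z) ∂(Q x) ∂PX = ∫⁻ p, c p ∂γ := by
  obtain ⟨hγ1, hγ2⟩ := hγ
  haveI : IsProbabilityMeasure γ := by
    constructor
    rw [← Set.preimage_univ (f := @Prod.fst 𝒳 𝒳),
      ← Measure.map_apply measurable_fst MeasurableSet.univ, hγ1]
    exact measure_univ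
  have he : Measurable (fun z => (G z, z)) := hG.prodMk measurable_id
  set ρ : Measure (𝒳 × 𝒵) := PZ.map (fun z => (G z, z)) with hρdef
  haveI : IsProbabilityMeasure ρ := Measure.isProbabilityMeasure_map he.aemeasurable
  have hρfst : ρ.fst = PZ.map G := by
    rw [hρdef, Measure.fst, Measure.map_map measurable_fst he]
    rfl
  have hρsnd : ρ.snd = PZ := by
    rw [hρdef, Measure.snd, Measure.map_map measurable_snd he]
    exact Measure.map_id
  have hγfst : γ.fst = PX := hγ1
  set κ : Kernel 𝒳 𝒵 := ρ.condKernel with hκdef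
  set η : Kernel 𝒳 𝒳 := γ.condKernel with hηdef
  have hγdis : PX ⊗ₘ η = γ := by
    rw [hηdef, ← hγfst]; exact γ.disintegrate γ.condKernel
  have hρdis : (PZ.map G) ⊗ₘ κ = ρ := by
    rw [hκdef, ← hρfst]; exact ρ.disintegrate ρ.condKernel
  have hbindη : PX.bind (fun x => η x) = PZ.map G := by
    rw [← aux_snd_compProd, hγdis, ← hγ2]; rfl
  have hbindκ : (PZ.map G).bind (fun x => κ x) = PZ := by
    rw [← aux_snd_compProd, hρdis, hρsnd]
  refine ⟨κ ∘ₖ η, inferInstance, ?_, ?_⟩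
  · calc PX.bind (fun x => (κ ∘ₖ η) x)
        = PX.bind (fun x => (η x).bind (fun y => κ y)) := by
          simp only [Kernel.comp_apply]
      _ = (PX.bind (fun x => η x)).bind (fun y => κ y) :=
          (Measure.bind_bind (Kernel.measurable η).aemeasurable (Kernel.measurable κ).aemeasurable).symm
      _ = PZ := by rw [hbindη, hbindκ]
  · -- the main cost computation
    letI := upgradeStandardBorel 𝒳
    have hS : MeasurableSet {p : 𝒳 × 𝒵 | p.1 = G p.2} :=
      MeasureTheory.StronglyMeasurable.measurableSet_eq_fun measurable_fst.stronglyMeasurable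
        (hG.comp measurable_snd).stronglyMeasurable
    have h1 : ∀ᵐ p ∂ρ, p.1 = G p.2 := by
      rw [hρdef, ae_map_iff he.aemeasurable hS]
      filter_upwards with z using rfl
    rw [← hρdis] at h1
    have h2 : ∀ᵐ x' ∂(PZ.map G), ∀ᵐ z ∂κ x', x' = G z :=
      Measure.ae_ae_of_ae_compProd h1
    have h3 : ∀ᵐ x' ∂(PZ.map G), κ x' {z | ¬ x' = G z} = 0 :=
      h2.mono fun x' h => ae_iff.mp h
    set N : Set 𝒳 := {x' | κ x' {z | (x', z) ∈ {p : 𝒳 × 𝒵 | p.1 = G p.2}ᶜ} ≠ 0} with hNdef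
    have hNmeas : MeasurableSet N :=
      ((Kernel.measurable_kernel_prodMk_left hS.compl) (measurableSet_singleton 0)).compl
    have hN0 : (PZ.map G) N = 0 := ae_iff.mp h3
    have h4 : ∀ᵐ x ∂PX, η x N = 0 := by
      have hb : (PX.bind (fun x => η x)) N = 0 := by rw [hbindη]; exact hN0
      rw [Measure.bind_apply hNmeas (Kernel.measurable η).aemeasurable] at hb
      have := (lintegral_eq_zero_iff (Kernel.measurable_coe η hNmeas)).mp hb
      filter_upwards [this] with x hx using hx
    have hcz : ∀ x : 𝒳, Measurable (fun z => c (x, G z)) :=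
      fun x => hc.comp (measurable_const.prodMk hG)
    calc ∫⁻ x, ∫⁻ z, c (x, G z) ∂((κ ∘ₖ η) x) ∂PX
        = ∫⁻ x, ∫⁻ x', ∫⁻ z, c (x, G z) ∂κ x' ∂η x ∂PX := by
          refine lintegral_congr fun x => ?_
          rw [Kernel.comp_apply, Measure.lintegral_bind (Kernel.measurable κ).aemeasurable (hcz x).aemeasurable]
      _ = ∫⁻ x, ∫⁻ x', c (x, x') ∂η x ∂PX := by
          refine lintegral_congr_ae ?_
          filter_upwards [h4] with x hx
          refine lintegral_congr_ae ?_
          have hae : ∀ᵐ x' ∂η x, x' ∉ N := by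
            rw [ae_iff]
            simpa using hx
          filter_upwards [hae] with x' hx'
          have hκx' : ∀ᵐ z ∂κ x', x' = G z := by
            rw [ae_iff]
            simpa [hNdef] using hx'
          calc ∫⁻ z, c (x, G z) ∂κ x'
              = ∫⁻ z, c (x, x') ∂κ x' := by
                refine lintegral_congr_ae ?_
                filter_upwards [hκx'] with z hz
                rw [← hz]
            _ = c (x, x') := by simp
      _ = ∫⁻ p, c p ∂(PX ⊗ₘ η) := (Measure.lintegral_compProd hc).symm
      _ = ∫⁻ p, c p ∂γ := by rw [hγdis]

/-- For any Markov kernel `Q` whose aggregated posterior equals `P_Z`, the law of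
`(X, G(Z))` is a coupling of `P_X` and `P_G = G_* P_Z`, hence its cost dominates
`W_c(P_X, P_G)`; conversely, the infimum over all such constrained `Q` equals
`W_c(P_X, P_G)`. -/
theorem constrained_encoder_formulation
    {𝒳 𝒵 : Type*} [MeasurableSpace 𝒳] [MeasurableSpace 𝒵]
    [StandardBorelSpace 𝒳] [StandardBorelSpace 𝒵] [Nonempty 𝒳] [Nonempty 𝒵]
    (PX : Measure 𝒳) (PZ : Measure 𝒵)
    [IsProbabilityMeasure PX] [IsProbabilityMeasure PZ]
    (G : 𝒵 → 𝒳) (hG : Measurable G)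
    (c : 𝒳 × 𝒳 → ℝ≥0∞) (hc : Measurable c) :
    (∀ Q : Kernel 𝒳 𝒵, ∀ _ : IsMarkovKernel Q, PX.bind (fun x => Q x) = PZ →
      ((PX ⊗ₘ Q).map (fun p => (p.1, G p.2)) ∈ couplings PX (PZ.map G)
      ∧ sInf ((fun γ : Measure (𝒳 × 𝒳) => ∫⁻ p, c p ∂γ) '' couplings PX (PZ.map G))
          ≤ ∫⁻ x, ∫⁻ z, c (x, G z) ∂(Q x) ∂PX))
    ∧ (⨅ Q : {Q : Kernel 𝒳 𝒵 // IsMarkovKernel Q ∧ PX.bind (fun x => Q x) = PZ},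
          ∫⁻ x, ∫⁻ z, c (x, G z) ∂(Q.1 x) ∂PX)
        = sInf ((fun γ : Measure (𝒳 × 𝒳) => ∫⁻ p, c p ∂γ) '' couplings PX (PZ.map G)) := by
  constructor
  · intro Q hQ hbind
    obtain ⟨hmem, hval⟩ := aux_direct PX PZ G hG c hc Q hQ hbind
    exact ⟨hmem, hval ▸ sInf_le ⟨_, hmem, rfl⟩⟩
  · apply le_antisymm
    · refine le_sInf fun w hw => ?_
      obtain ⟨γ, hγmem, rfl⟩ := hw
      obtain ⟨Q, hQ, hbind, hval⟩ := aux_converse PX PZ G hG c hc γ hγmem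
      exact iInf_le_of_le ⟨Q, hQ, hbind⟩ (le_of_eq hval)
    · refine le_iInf fun Q => ?_
      obtain ⟨hmem, hval⟩ := aux_direct PX PZ G hG c hc Q.1 Q.2.1 Q.2.2
      exact hval ▸ sInf_le ⟨_, hmem, rfl⟩
end
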